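/- arXiv:0811.3402 — 16 statements merged into one kernel-verified Lean document; each statement's English description precedes it below -/
import Mathlib

section
/- Let X be a set and R a binary relation on X. Then there exists a total preorder S on X (i.e., a binary relation that is total, reflexive, and transitive) that extends R (R ⊆ S) and such that for all x, y ∈ X, if x S y and y S x then x R* y, where R* denotes the reflexive–transitive closure of R. -/
/-- There exists a total preorder `S` extending `R` such that mutual `S`-comparability
implies membership in the reflexive-transitive closure of `R`. -/
theorem total_preorder_extension {X : Type*} (R : X → X → Prop) :
    ∃ S : X → X → Prop,
      (∀ x y, S x y ∨ S y x) ∧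
      (∀ x, S x x) ∧
      (∀ x y z, S x y → S y z → S x z) ∧
      (∀ x y, R x y → S x y) ∧
      (∀ x y, S x y → S y x → Relation.ReflTransGen R x y) := by
  classical
  letI P : Preorder X :=
    { le := Relation.ReflTransGen R
      le_refl := fun _ => Relation.ReflTransGen.refl
      le_trans := fun _ _ _ => Relation.ReflTransGen.trans }
  letI : IsPreorder X (· ≤ ·) := { refl := le_refl, trans := fun _ _ _ => le_trans }
  let f : X → LinearExtension (Antisymmetrization X (· ≤ ·)) :=
    fun x => toLinearExtension (toAntisymmetrization (· ≤ ·) x)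
  have hmono : ∀ {x y : X}, Relation.ReflTransGen R x y → f x ≤ f y := by
    intro x y h
    exact toLinearExtension.monotone (toAntisymmetrization_mono h)
  refine ⟨fun x y => f x ≤ f y, fun x y => le_total _ _, fun x => le_refl _,
    fun x y z => le_trans, fun x y h => hmono (Relation.ReflTransGen.single h), ?_⟩
  intro x y h h'
  have hfe : f x = f y := le_antisymm h h'
  have heq : toAntisymmetrization (· ≤ ·) x = toAntisymmetrization (· ≤ ·) y := hfe
  exact (Quotient.exact' heq).1
end

section
/- Let U be a set, 𝒴 a collection of subsets of U closed under finite unions and under set difference (X, Y ∈ 𝒴 implies X ∪ Y ∈ 𝒴 and X \ Y ∈ 𝒴), and f a function assigning to each X ∈ 𝒴 a subset f(X) ⊆ U satisfying (μ⊆). Then the following are equivalent: (i) f satisfies (μPR); (ii) f satisfies (μOR); (iii) f satisfies (μwOR). Moreover, if f satisfies (μ⊆) and (μwOR), then f(X ∪ Y) ⊆ f(X) ∪ f(Y) ∪ (X ∩ Y) for all X, Y ∈ 𝒴 with X ∪ Y ∈ 𝒴. -/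
/-- For `f` satisfying (μ⊆) on a domain closed under finite unions and set difference,
(μPR), (μOR) and (μwOR) are equivalent; moreover (μ⊆) + (μwOR) imply
`f(X ∪ Y) ⊆ f(X) ∪ f(Y) ∪ (X ∩ Y)`. -/
theorem muPR_muOR_muwOR_equiv {α : Type*} (𝒴 : Set (Set α)) (f : Set α → Set α)
    (hUnion : ∀ A ∈ 𝒴, ∀ B ∈ 𝒴, A ∪ B ∈ 𝒴)
    (hDiff : ∀ A ∈ 𝒴, ∀ B ∈ 𝒴, A \ B ∈ 𝒴)
    (hSub : ∀ X ∈ 𝒴, f X ⊆ X) :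
    ((∀ X ∈ 𝒴, ∀ Y ∈ 𝒴, X ⊆ Y → f Y ∩ X ⊆ f X) ↔
      (∀ X ∈ 𝒴, ∀ Y ∈ 𝒴, X ∪ Y ∈ 𝒴 → f (X ∪ Y) ⊆ f X ∪ f Y)) ∧
    ((∀ X ∈ 𝒴, ∀ Y ∈ 𝒴, X ⊆ Y → f Y ∩ X ⊆ f X) ↔
      (∀ X ∈ 𝒴, ∀ Y ∈ 𝒴, X ∪ Y ∈ 𝒴 → f (X ∪ Y) ⊆ f X ∪ Y)) ∧
    ((∀ X ∈ 𝒴, ∀ Y ∈ 𝒴, X ∪ Y ∈ 𝒴 → f (X ∪ Y) ⊆ f X ∪ Y) →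
      ∀ X ∈ 𝒴, ∀ Y ∈ 𝒴, X ∪ Y ∈ 𝒴 → f (X ∪ Y) ⊆ f X ∪ f Y ∪ (X ∩ Y)) := by
  have hPRtoOR : (∀ X ∈ 𝒴, ∀ Y ∈ 𝒴, X ⊆ Y → f Y ∩ X ⊆ f X) →
      ∀ X ∈ 𝒴, ∀ Y ∈ 𝒴, X ∪ Y ∈ 𝒴 → f (X ∪ Y) ⊆ f X ∪ f Y := by
    intro hPR X hX Y hY hXY z hz
    rcases hSub _ hXY hz with hzX | hzY
    · exact Or.inl (hPR X hX (X ∪ Y) hXY Set.subset_union_left ⟨hz, hzX⟩)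
    · exact Or.inr (hPR Y hY (X ∪ Y) hXY Set.subset_union_right ⟨hz, hzY⟩)
  have hORtowOR : (∀ X ∈ 𝒴, ∀ Y ∈ 𝒴, X ∪ Y ∈ 𝒴 → f (X ∪ Y) ⊆ f X ∪ f Y) →
      ∀ X ∈ 𝒴, ∀ Y ∈ 𝒴, X ∪ Y ∈ 𝒴 → f (X ∪ Y) ⊆ f X ∪ Y := by
    intro hOR X hX Y hY hXY
    exact (hOR X hX Y hY hXY).trans (Set.union_subset_union_right _ (hSub _ hY))
  have hwORtoPR : (∀ X ∈ 𝒴, ∀ Y ∈ 𝒴, X ∪ Y ∈ 𝒴 → f (X ∪ Y) ⊆ f X ∪ Y) →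
      ∀ X ∈ 𝒴, ∀ Y ∈ 𝒴, X ⊆ Y → f Y ∩ X ⊆ f X := by
    intro hwOR X hX Y hY hXsubY z hz
    have hYeq : X ∪ (Y \ X) = Y := Set.union_diff_cancel hXsubY
    have := hwOR X hX (Y \ X) (hDiff Y hY X hX) (by rw [hYeq]; exact hY)
    rw [hYeq] at this
    rcases this hz.1 with h | h
    · exact h
    · exact absurd hz.2 h.2
  refine ⟨⟨hPRtoOR, fun h => hwORtoPR (hORtowOR h)⟩,
    ⟨fun h => hORtowOR (hPRtoOR h), hwORtoPR⟩, ?_⟩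
  intro hwOR X hX Y hY hXY z hz
  rcases hwOR X hX Y hY hXY hz with h | hzY
  · exact Or.inl (Or.inl h)
  · have := hwOR Y hY X hX (Set.union_comm X Y ▸ hXY)
    rw [Set.union_comm] at this
    rcases this hz with h | hzX
    · exact Or.inl (Or.inr h)
    · exact Or.inr ⟨hzX, hzY⟩
end

section
/- Let U be a set, 𝒴 a collection of subsets of U closed under finite intersections (X, Y ∈ 𝒴 implies X ∩ Y ∈ 𝒴), and f a function assigning to each X ∈ 𝒴 a subset f(X) ⊆ U satisfying (μ⊆). Then f satisfies (μCUM) if and only if f satisfies (μ⊆⊇). -/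
/-- For `f` satisfying (μ⊆) on a domain closed under finite intersections,
(μCUM) holds iff (μ⊆⊇) holds. -/
theorem muCUM_iff_muSubSup {α : Type*} (𝒴 : Set (Set α)) (f : Set α → Set α)
    (hInter : ∀ A ∈ 𝒴, ∀ B ∈ 𝒴, A ∩ B ∈ 𝒴)
    (hSub : ∀ X ∈ 𝒴, f X ⊆ X) :
    (∀ X ∈ 𝒴, ∀ Y ∈ 𝒴, f X ⊆ Y → Y ⊆ X → f Y = f X) ↔
    (∀ X ∈ 𝒴, ∀ Y ∈ 𝒴, f X ⊆ Y → f Y ⊆ X → f X = f Y) := by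
  constructor
  · intro hCUM X hX Y hY hXY hYX
    have hZ : X ∩ Y ∈ 𝒴 := hInter X hX Y hY
    have h1 : f (X ∩ Y) = f X :=
      hCUM X hX (X ∩ Y) hZ (Set.subset_inter (hSub X hX) hXY) Set.inter_subset_left
    have h2 : f (X ∩ Y) = f Y :=
      hCUM Y hY (X ∩ Y) hZ (Set.subset_inter hYX (hSub Y hY)) Set.inter_subset_right
    rw [← h1, h2]
  · intro h X hX Y hY hXY hYX
    exact (h X hX Y hY hXY ((hSub Y hY).trans hYX)).symm
end

section
/- Let U be a set, 𝒴 a collection of subsets of U, and f a function assigning to each X ∈ 𝒴 a subset f(X) ⊆ U. Then: (a) f satisfies (μ=) if and only if f satisfies both (μPR) and (μRatM); (b) if moreover 𝒴 is closed under finite intersections and f satisfies (μ⊆), then f satisfies (μ=) if and only if f satisfies (μ='). -/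
/-- (a) (μ=) is equivalent to (μPR) together with (μRatM);
(b) given closure under finite intersections and (μ⊆), (μ=) is equivalent to (μ='). -/
theorem muEq_characterizations {α : Type*} (𝒴 : Set (Set α)) (f : Set α → Set α) :
    ((∀ X ∈ 𝒴, ∀ Y ∈ 𝒴, X ⊆ Y → (X ∩ f Y).Nonempty → f X = f Y ∩ X) ↔
      ((∀ X ∈ 𝒴, ∀ Y ∈ 𝒴, X ⊆ Y → f Y ∩ X ⊆ f X) ∧
       (∀ X ∈ 𝒴, ∀ Y ∈ 𝒴, X ⊆ Y → (X ∩ f Y).Nonempty → f X ⊆ f Y ∩ X))) ∧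
    ((∀ A ∈ 𝒴, ∀ B ∈ 𝒴, A ∩ B ∈ 𝒴) → (∀ X ∈ 𝒴, f X ⊆ X) →
      ((∀ X ∈ 𝒴, ∀ Y ∈ 𝒴, X ⊆ Y → (X ∩ f Y).Nonempty → f X = f Y ∩ X) ↔
       (∀ X ∈ 𝒴, ∀ Y ∈ 𝒴, X ∩ Y ∈ 𝒴 → (f Y ∩ X).Nonempty → f (Y ∩ X) = f Y ∩ X))) := by
  constructor
  · constructor
    · intro h
      constructor
      · intro X hX Y hY hXY
        by_cases hne : (X ∩ f Y).Nonempty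
        · rw [h X hX Y hY hXY hne]
        · rw [Set.not_nonempty_iff_eq_empty] at hne
          intro a ha
          exact absurd (Set.eq_empty_iff_forall_notMem.mp hne a ⟨ha.2, ha.1⟩) (fun h => h)
      · intro X hX Y hY hXY hne
        rw [h X hX Y hY hXY hne]
    · rintro ⟨hPR, hRM⟩ X hX Y hY hXY hne
      exact Set.Subset.antisymm (hRM X hX Y hY hXY hne) (hPR X hX Y hY hXY)
  · intro hclose hsub
    constructor
    · intro h X hX Y hY hXYmem hne
      obtain ⟨a, haf, haX⟩ := hne
      have haY : a ∈ Y := hsub Y hY haf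
      have hsubYX : Y ∩ X ⊆ Y := Set.inter_subset_left
      have := h (Y ∩ X) (by rw [Set.inter_comm]; exact hXYmem) Y hY hsubYX
        ⟨a, ⟨haY, haX⟩, haf⟩
      rw [this]
      ext x
      constructor
      · rintro ⟨hxf, _, hxX⟩; exact ⟨hxf, hxX⟩
      · rintro ⟨hxf, hxX⟩; exact ⟨hxf, hsub Y hY hxf, hxX⟩
    · intro h X hX Y hY hXY hne
      have hXY' : X ∩ Y ∈ 𝒴 := hclose X hX Y hY
      obtain ⟨a, haX, haf⟩ := hne
      have := h X hX Y hY hXY' ⟨a, haf, haX⟩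
      rwa [Set.inter_eq_right.mpr hXY] at this
end

section
/- Let U be a set, 𝒴 a collection of subsets of U closed under finite unions, and f a function assigning to each X ∈ 𝒴 a subset f(X) ⊆ U satisfying (μ⊆), (μ∅), and (μ=). Then f satisfies (μ∪), (μ∪'), (μ‖), and (μCUM). -/
/-- (μ⊆), (μ∅), (μ=) on a domain closed under finite unions imply
(μ∪), (μ∪'), (μ‖) and (μCUM). -/
theorem muSub_muEmpty_muEq_consequences {α : Type*} (𝒴 : Set (Set α)) (f : Set α → Set α)
    (hUnion : ∀ A ∈ 𝒴, ∀ B ∈ 𝒴, A ∪ B ∈ 𝒴)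
    (hSub : ∀ X ∈ 𝒴, f X ⊆ X)
    (hEmpty : ∀ X ∈ 𝒴, f X = ∅ → X = ∅)
    (hEq : ∀ X ∈ 𝒴, ∀ Y ∈ 𝒴, X ⊆ Y → (X ∩ f Y).Nonempty → f X = f Y ∩ X) :
    (∀ X ∈ 𝒴, ∀ Y ∈ 𝒴, X ∪ Y ∈ 𝒴 →
       (f Y ∩ (X \ f X)).Nonempty → f (X ∪ Y) ∩ Y = ∅) ∧
    (∀ X ∈ 𝒴, ∀ Y ∈ 𝒴, X ∪ Y ∈ 𝒴 →
       (f Y ∩ (X \ f X)).Nonempty → f (X ∪ Y) = f X) ∧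
    (∀ X ∈ 𝒴, ∀ Y ∈ 𝒴, X ∪ Y ∈ 𝒴 →
       f (X ∪ Y) = f X ∨ f (X ∪ Y) = f Y ∨ f (X ∪ Y) = f X ∪ f Y) ∧
    (∀ X ∈ 𝒴, ∀ Y ∈ 𝒴, f X ⊆ Y → Y ⊆ X → f Y = f X) := by
  have keyX : ∀ X ∈ 𝒴, ∀ Y ∈ 𝒴, X ∪ Y ∈ 𝒴 →
      (f (X ∪ Y) ∩ X).Nonempty → f X = f (X ∪ Y) ∩ X := by
    intro X hX Y hY hXY hne
    exact hEq X hX (X ∪ Y) hXY Set.subset_union_left (by rwa [Set.inter_comm] at hne)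
  have keyY : ∀ X ∈ 𝒴, ∀ Y ∈ 𝒴, X ∪ Y ∈ 𝒴 →
      (f (X ∪ Y) ∩ Y).Nonempty → f Y = f (X ∪ Y) ∩ Y := by
    intro X hX Y hY hXY hne
    exact hEq Y hY (X ∪ Y) hXY Set.subset_union_right (by rwa [Set.inter_comm] at hne)
  have mu1 : ∀ X ∈ 𝒴, ∀ Y ∈ 𝒴, X ∪ Y ∈ 𝒴 →
      (f Y ∩ (X \ f X)).Nonempty → f (X ∪ Y) ∩ Y = ∅ := by
    intro X hX Y hY hXY ⟨a, haY, haX, hanfX⟩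
    by_contra h
    obtain ⟨b, hb⟩ := Set.nonempty_iff_ne_empty.2 h
    have hfY := keyY X hX Y hY hXY ⟨b, hb⟩
    have haU : a ∈ f (X ∪ Y) := (hfY ▸ haY).1
    have hfX := keyX X hX Y hY hXY ⟨a, haU, haX⟩
    exact hanfX (hfX ▸ ⟨haU, haX⟩)
  have mu2 : ∀ X ∈ 𝒴, ∀ Y ∈ 𝒴, X ∪ Y ∈ 𝒴 →
      (f Y ∩ (X \ f X)).Nonempty → f (X ∪ Y) = f X := by
    intro X hX Y hY hXY hne
    obtain ⟨a, haY, haX, hanfX⟩ := hne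
    have hY0 := mu1 X hX Y hY hXY ⟨a, haY, haX, hanfX⟩
    have hneU : (f (X ∪ Y)).Nonempty := by
      rcases Set.eq_empty_or_nonempty (f (X ∪ Y)) with h | h
      · exact absurd (hEmpty _ hXY h ▸ Set.mem_union_left Y haX) (Set.notMem_empty a)
      · exact h
    have hsubX : f (X ∪ Y) ⊆ X := by
      intro z hz
      rcases hSub _ hXY hz with h | h
      · exact h
      · exact absurd (⟨hz, h⟩ : z ∈ f (X ∪ Y) ∩ Y) (hY0 ▸ Set.notMem_empty z : z ∉ f (X ∪ Y) ∩ Y)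
    have := keyX X hX Y hY hXY (hneU.imp fun z hz => ⟨hz, hsubX hz⟩)
    rw [this, Set.inter_eq_left.2 hsubX]
  refine ⟨mu1, mu2, ?_, ?_⟩
  · intro X hX Y hY hXY
    rcases Set.eq_empty_or_nonempty (X ∪ Y) with hU | hU
    · have hXe : X = ∅ := Set.subset_eq_empty (hU ▸ Set.subset_union_left) rfl
      left
      rw [hU, hXe]
    · have hneU : (f (X ∪ Y)).Nonempty := by
        rcases Set.eq_empty_or_nonempty (f (X ∪ Y)) with h | h
        · exact absurd (hEmpty _ hXY h) (Set.nonempty_iff_ne_empty.1 hU)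
        · exact h
      rcases Set.eq_empty_or_nonempty (f (X ∪ Y) ∩ X) with hXe | hXne
      · -- f (X∪Y) ⊆ Y
        have hsubY : f (X ∪ Y) ⊆ Y := by
          intro z hz
          rcases hSub _ hXY hz with h | h
          · exact absurd (⟨hz, h⟩ : z ∈ f (X ∪ Y) ∩ X) (hXe ▸ Set.notMem_empty z : z ∉ f (X ∪ Y) ∩ X)
          · exact h
        right; left
        rw [keyY X hX Y hY hXY (hneU.imp fun z hz => ⟨hz, hsubY hz⟩),
          Set.inter_eq_left.2 hsubY]
      · rcases Set.eq_empty_or_nonempty (f (X ∪ Y) ∩ Y) with hYe | hYne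
        · have hsubX : f (X ∪ Y) ⊆ X := by
            intro z hz
            rcases hSub _ hXY hz with h | h
            · exact h
            · exact absurd (⟨hz, h⟩ : z ∈ f (X ∪ Y) ∩ Y) (hYe ▸ Set.notMem_empty z : z ∉ f (X ∪ Y) ∩ Y)
          left
          rw [keyX X hX Y hY hXY hXne, Set.inter_eq_left.2 hsubX]
        · right; right
          rw [keyX X hX Y hY hXY hXne, keyY X hX Y hY hXY hYne,
            ← Set.inter_union_distrib_left, Set.inter_eq_left.2 (hSub _ hXY)]
  · intro X hX Y hY hfXY hYX
    rcases Set.eq_empty_or_nonempty (f X) with hfe | hfne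
    · have hXe := hEmpty X hX hfe
      have hYe : Y = ∅ := Set.subset_eq_empty (hXe ▸ hYX) rfl
      have : f Y ⊆ (∅ : Set α) := hYe ▸ hSub Y hY
      rw [hfe, Set.subset_empty_iff.1 this]
    · have := hEq Y hY X hX hYX (hfne.imp fun z hz => ⟨hfXY hz, hz⟩)
      rw [this, Set.inter_eq_left.2 hfXY]
end

section
/- Let U be a set, 𝒴 a collection of subsets of U, and f a function assigning to each X ∈ 𝒴 a subset f(X) ⊆ U satisfying (μ⊆), (μCUM), and (μ=). Then: (a) if 𝒴 is closed under finite unions, f satisfies (μ‖); (b) if 𝒴 is closed under finite unions and contains all singletons {a} for a ∈ U, then f satisfies (μ∈). -/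
/-- (μ⊆), (μCUM), (μ=) imply: (a) (μ‖) given closure under finite unions;
(b) (μ∈) given closure under finite unions and all singletons in the domain. -/
theorem muCUM_muEq_imply_muPar_muIn {α : Type*} (𝒴 : Set (Set α)) (f : Set α → Set α)
    (hSub : ∀ X ∈ 𝒴, f X ⊆ X)
    (hCum : ∀ X ∈ 𝒴, ∀ Y ∈ 𝒴, f X ⊆ Y → Y ⊆ X → f Y = f X)
    (hEq : ∀ X ∈ 𝒴, ∀ Y ∈ 𝒴, X ⊆ Y → (X ∩ f Y).Nonempty → f X = f Y ∩ X) :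
    ((∀ A ∈ 𝒴, ∀ B ∈ 𝒴, A ∪ B ∈ 𝒴) →
      ∀ X ∈ 𝒴, ∀ Y ∈ 𝒴, X ∪ Y ∈ 𝒴 →
        f (X ∪ Y) = f X ∨ f (X ∪ Y) = f Y ∨ f (X ∪ Y) = f X ∪ f Y) ∧
    ((∀ A ∈ 𝒴, ∀ B ∈ 𝒴, A ∪ B ∈ 𝒴) → (∀ a : α, ({a} : Set α) ∈ 𝒴) →
      ∀ X ∈ 𝒴, ∀ a ∈ X \ f X, ∃ b ∈ X, ({a, b} : Set α) ∈ 𝒴 ∧ a ∉ f {a, b}) := by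
  constructor
  · intro _ X hX Y hY hXY
    by_cases hx : (X ∩ f (X ∪ Y)).Nonempty
    · by_cases hy : (Y ∩ f (X ∪ Y)).Nonempty
      · right; right
        have h1 := hEq X hX (X ∪ Y) hXY Set.subset_union_left hx
        have h2 := hEq Y hY (X ∪ Y) hXY Set.subset_union_right hy
        rw [h1, h2, ← Set.inter_union_distrib_left,
          Set.inter_eq_self_of_subset_left (hSub _ hXY)]
      · left
        have hsub : f (X ∪ Y) ⊆ X := by
          intro z hz
          rcases hSub _ hXY hz with h | h
          · exact h
          · exact absurd ⟨h, hz⟩ (fun hc => hy ⟨z, hc⟩)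
        exact (hCum (X ∪ Y) hXY X hX hsub Set.subset_union_left).symm
    · right; left
      have hsub : f (X ∪ Y) ⊆ Y := by
        intro z hz
        rcases hSub _ hXY hz with h | h
        · exact absurd ⟨h, hz⟩ (fun hc => hx ⟨z, hc⟩)
        · exact h
      exact (hCum (X ∪ Y) hXY Y hY hsub Set.subset_union_right).symm
  · intro hUnion hSing X hX a ha
    by_cases hfx : (f X).Nonempty
    · obtain ⟨b, hb⟩ := hfx
      have hpair : ({a, b} : Set α) ∈ 𝒴 := by
        show insert a {b} ∈ 𝒴
        rw [Set.insert_eq]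
        exact hUnion {a} (hSing a) {b} (hSing b)
      refine ⟨b, hSub _ hX hb, hpair, ?_⟩
      intro hmem
      have hsubX : ({a, b} : Set α) ⊆ X := by
        intro z hz
        rcases hz with rfl | rfl
        · exact ha.1
        · exact hSub _ hX hb
      have hne : (({a, b} : Set α) ∩ f X).Nonempty := ⟨b, Or.inr rfl, hb⟩
      have h := hEq {a, b} hpair X hX hsubX hne
      rw [h] at hmem
      exact ha.2 hmem.1
    · refine ⟨a, ha.1, ?_, ?_⟩
      · simpa using hSing a
      · have hfa : f {a} = f X := by
          refine hCum X hX {a} (hSing a) ?_ (by simpa using ha.1)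
          rw [Set.not_nonempty_iff_eq_empty.mp hfx]
          exact Set.empty_subset _
        have h2 : f ({a, a} : Set α) = f X := by
          rw [Set.pair_eq_singleton]; exact hfa
        rw [h2, Set.not_nonempty_iff_eq_empty.mp hfx]
        simp
end

section
/- Let U be a set and f : 𝒫(U) → 𝒫(U) with f(X) ⊆ X for every X ⊆ U. For X ⊆ U, call A ⊆ U big in X iff f(X) ⊆ A ⊆ X, and small in X iff A ⊆ X and A ∩ f(X) = ∅. Then: (a) f satisfies (μCM) (for all X, Y ⊆ U, f(X) ⊆ Y ⊆ X implies f(Y) ⊆ f(X)) if and only if for every X ⊆ U and all A, B ⊆ X with A big in X and B small in X, A \ B is big in X \ B; (b) f satisfies (μRatM) (for all X, Y ⊆ U with X ⊆ Y and X ∩ f(Y) ≠ ∅, f(X) ⊆ f(Y) ∩ X) if and only if for every X ⊆ U and all A, B ⊆ X with A big in X and B not big in X, A \ B is big in X \ B. -/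
/-- (a) (μCM) is equivalent to the coherence condition (R↓):
big minus small is big in the reduced set;
(b) (μRatM) is equivalent to (R↓↓): big minus non-big is big in the reduced set. -/
theorem muCM_muRatM_filter_coherence {α : Type*} (f : Set α → Set α)
    (hSub : ∀ X : Set α, f X ⊆ X) :
    let Big : Set α → Set α → Prop := fun X A => f X ⊆ A ∧ A ⊆ X
    let Small : Set α → Set α → Prop := fun X A => A ⊆ X ∧ A ∩ f X = ∅
    ((∀ X Y : Set α, f X ⊆ Y → Y ⊆ X → f Y ⊆ f X) ↔
      (∀ X A B : Set α, A ⊆ X → B ⊆ X → Big X A → Small X B → Big (X \ B) (A \ B))) ∧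
    ((∀ X Y : Set α, X ⊆ Y → (X ∩ f Y).Nonempty → f X ⊆ f Y ∩ X) ↔
      (∀ X A B : Set α, A ⊆ X → B ⊆ X → Big X A → ¬ Big X B → Big (X \ B) (A \ B))) := by
  intro Big Small
  constructor
  · constructor
    · intro hCM X A B hAX hBX hBig hSmall
      have hfXB : ∀ x ∈ f X, x ∉ B := by
        intro x hx hxB
        have : x ∈ B ∩ f X := ⟨hxB, hx⟩
        simp [hSmall.2] at this
      have h1 : f X ⊆ X \ B := fun x hx => ⟨hSub X hx, hfXB x hx⟩
      have h2 : f (X \ B) ⊆ f X := hCM X (X \ B) h1 Set.diff_subset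
      refine ⟨fun x hx => ⟨hBig.1 (h2 hx), hfXB x (h2 hx)⟩, Set.diff_subset_diff_left hAX⟩
    · intro hR X Y hfXY hYX
      have hBsub : X \ Y ⊆ X := Set.diff_subset
      have hSmall : Small X (X \ Y) := by
        refine ⟨hBsub, ?_⟩
        ext x
        simp only [Set.mem_inter_iff, Set.mem_diff, Set.mem_empty_iff_false, iff_false]
        rintro ⟨⟨_, hxY⟩, hxf⟩
        exact hxY (hfXY hxf)
      have := hR X (f X) (X \ Y) (hSub X) hBsub ⟨le_refl _, hSub X⟩ hSmall
      have hXY : X \ (X \ Y) = Y := by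
        rw [Set.diff_diff_right, Set.diff_self, Set.empty_union,
          Set.inter_eq_right.mpr hYX]
      rw [hXY] at this
      exact fun x hx => (this.1 hx).1
  · constructor
    · intro hRat X A B hAX hBX hBig hnBig
      have hne : ((X \ B) ∩ f X).Nonempty := by
        by_contra h
        apply hnBig
        refine ⟨fun x hx => ?_, hBX⟩
        by_contra hxB
        exact h ⟨x, ⟨hSub X hx, hxB⟩, hx⟩
      have h2 := hRat (X \ B) X Set.diff_subset hne
      refine ⟨fun x hx => ?_, Set.diff_subset_diff_left hAX⟩
      obtain ⟨hxf, hxX, hxB⟩ := h2 hx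
      exact ⟨hBig.1 hxf, hxB⟩
    · intro hR X Y hXY ⟨x, hxX, hxf⟩
      have hnBig : ¬ Big Y (Y \ X) := by
        rintro ⟨h1, _⟩
        exact (h1 hxf).2 hxX
      have := hR Y (f Y) (Y \ X) (hSub Y) Set.diff_subset ⟨le_refl _, hSub Y⟩ hnBig
      have hYX : Y \ (Y \ X) = X := by
        rw [Set.diff_diff_right, Set.diff_self, Set.empty_union,
          Set.inter_eq_right.mpr hXY]
      rw [hYX] at this
      exact fun y hy => ⟨(this.1 hy).1, hSub X hy⟩
end

section
/- Let ⟨I, ℓ, ≺⟩ be a preferential structure over a set U with minimization function μ, let 𝒴 be a collection of subsets of U, and suppose the structure is smooth for every X ∈ 𝒴. Then μ satisfies (μ⊆), (μPR), and (μCUM) on 𝒴; in particular, for all X, Y ∈ 𝒴, if μ(X) ⊆ Y ⊆ X then μ(Y) = μ(X). -/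
/-- The minimization function of a preferential structure ⟨I, ℓ, ≺⟩ over U. -/
def prefMu {I U : Type*} (ℓ : I → U) (prec : I → I → Prop) (X : Set U) : Set U :=
  {x ∈ X | ∃ i : I, ℓ i = x ∧ ¬ ∃ j : I, ℓ j ∈ X ∧ prec j i}

/-- (μ⊆), (μPR) and (μCUM) hold (on 𝒴) in preferential structures smooth for every X ∈ 𝒴. -/
theorem smooth_prefMu_muSub_muPR_muCUM {I U : Type*} (ℓ : I → U) (prec : I → I → Prop)
    (𝒴 : Set (Set U))
    (hSmooth : ∀ X ∈ 𝒴, ∀ i : I, ℓ i ∈ X →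
      (¬ ∃ j : I, ℓ j ∈ X ∧ prec j i) ∨
      (∃ j : I, prec j i ∧ ℓ j ∈ X ∧ ¬ ∃ k : I, ℓ k ∈ X ∧ prec k j)) :
    (∀ X ∈ 𝒴, prefMu ℓ prec X ⊆ X) ∧
    (∀ X ∈ 𝒴, ∀ Y ∈ 𝒴, X ⊆ Y → prefMu ℓ prec Y ∩ X ⊆ prefMu ℓ prec X) ∧
    (∀ X ∈ 𝒴, ∀ Y ∈ 𝒴, prefMu ℓ prec X ⊆ Y → Y ⊆ X →
      prefMu ℓ prec Y = prefMu ℓ prec X) := by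
  refine ⟨fun X _ x hx => hx.1, ?_, ?_⟩
  · rintro X _ Y _ hXY x ⟨⟨_, i, hli, hmin⟩, hxX⟩
    exact ⟨hxX, i, hli, fun ⟨j, hj, hp⟩ => hmin ⟨j, hXY hj, hp⟩⟩
  · rintro X hX Y _ hmuY hYX
    ext x
    constructor
    · rintro ⟨hxY, i, hli, hmin⟩
      refine ⟨hYX hxY, i, hli, ?_⟩
      rintro ⟨j, hjX, hp⟩
      rcases hSmooth X hX i (hli ▸ hYX hxY) with h | ⟨k, hki, hkX, hkmin⟩
      · exact h ⟨j, hjX, hp⟩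
      · exact hmin ⟨k, hmuY ⟨hkX, k, rfl, hkmin⟩, hki⟩
    · rintro ⟨hxX, i, hli, hmin⟩
      exact ⟨hmuY ⟨hxX, i, hli, hmin⟩, i, hli,
        fun ⟨j, hjY, hp⟩ => hmin ⟨j, hYX hjY, hp⟩⟩
end

section
/- Let Z be a set, 𝒴 a collection of subsets of Z, and μ a function assigning to each X ∈ 𝒴 a subset μ(X) ⊆ Z satisfying (μ⊆) and (μPR). Let U ∈ 𝒴 and x ∈ Z, and write 𝒴ₓ := {Y ∈ 𝒴 : x ∈ Y \ μ(Y)}. Then x ∈ μ(U) if and only if x ∈ U and there exists a choice function g on 𝒴ₓ with g(Y) ∈ Y for every Y ∈ 𝒴ₓ and g(Y) ∉ U for every Y ∈ 𝒴ₓ. -/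
/-- Characterization of minimal elements via choice functions avoiding U
(Claim Mu-f): for μ satisfying (μ⊆) and (μPR), `x ∈ μ(U)` iff `x ∈ U` and there is a
choice function on 𝒴ₓ = {Y ∈ 𝒴 : x ∈ Y \ μ(Y)} whose range avoids U. -/
theorem mu_iff_choice_function {α : Type*} (𝒴 : Set (Set α)) (μ : Set α → Set α)
    (hSub : ∀ X ∈ 𝒴, μ X ⊆ X)
    (hPR : ∀ X ∈ 𝒴, ∀ Y ∈ 𝒴, X ⊆ Y → μ Y ∩ X ⊆ μ X)
    (U : Set α) (hU : U ∈ 𝒴) (x : α) :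
    x ∈ μ U ↔ x ∈ U ∧ ∃ g : Set α → α,
      ∀ Y ∈ 𝒴, x ∈ Y \ μ Y → g Y ∈ Y ∧ g Y ∉ U := by
  constructor
  · intro hx
    refine ⟨hSub U hU hx, ?_⟩
    have key : ∀ Y : Set α, Y ∈ 𝒴 → x ∈ Y \ μ Y → ∃ y, y ∈ Y ∧ y ∉ U := by
      intro Y hY hxY
      by_contra h
      push_neg at h
      have hYU : Y ⊆ U := fun y hy => h y hy
      exact hxY.2 (hPR Y hY U hU hYU ⟨hx, hxY.1⟩)
    classical
    refine ⟨fun Y => if h : Y ∈ 𝒴 ∧ x ∈ Y \ μ Y then (key Y h.1 h.2).choose else x, ?_⟩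
    intro Y hY hxY
    simp only [dif_pos (show Y ∈ 𝒴 ∧ x ∈ Y \ μ Y from ⟨hY, hxY⟩)]
    exact (key Y hY hxY).choose_spec
  · rintro ⟨hxU, g, hg⟩
    by_contra h
    obtain ⟨h1, h2⟩ := hg U hU ⟨hxU, h⟩
    exact h2 h1
end

section
/- Let Z be a set, 𝒴 a collection of subsets of Z, and μ a function assigning to each X ∈ 𝒴 a subset μ(X) ⊆ Z satisfying (μ⊆) and (μPR). Then there exists a preferential structure ⟨I, ℓ, ≺⟩ over Z whose relation ≺ is transitive and whose minimization function agrees with μ on 𝒴, i.e., μ(X) = {x ∈ X : there is i ∈ I with ℓ(i) = x and no j ∈ I with ℓ(j) ∈ X and j ≺ i} for every X ∈ 𝒴. -/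
universe u

/-- Any μ satisfying (μ⊆) and (μPR) is represented by a transitive preferential structure. -/
theorem representation_transitive {α : Type u} (𝒴 : Set (Set α)) (μ : Set α → Set α)
    (hSub : ∀ X ∈ 𝒴, μ X ⊆ X)
    (hPR : ∀ X ∈ 𝒴, ∀ Y ∈ 𝒴, X ⊆ Y → μ Y ∩ X ⊆ μ X) :
    ∃ (I : Type u) (ℓ : I → α) (prec : I → I → Prop),
      Transitive prec ∧ ∀ X ∈ 𝒴, μ X = prefMu ℓ prec X := by
  classical
  -- A copy is a pair (x, D) such that every y ∈ D ∪ {x} failing in some Y ∈ 𝒴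
  -- is "defended" by an element of D ∩ Y.
  let C : α × Set α → Prop := fun p =>
    ∀ y, (y ∈ p.2 ∨ y = p.1) → ∀ Y ∈ 𝒴, y ∈ Y → y ∉ μ Y → (p.2 ∩ Y).Nonempty
  refine ⟨{p : α × Set α // C p}, fun i => i.1.1,
    fun j i => j.1.1 ∈ i.1.2 ∧ j.1.2 ⊆ i.1.2, ?_, ?_⟩
  · rintro k j i ⟨hk1, hk2⟩ ⟨hj1, hj2⟩
    exact ⟨hj2 hk1, hk2.trans hj2⟩
  · intro X hX
    ext x
    constructor
    · -- μ X ⊆ prefMu: use the copy (x, Xᶜ)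
      intro hx
      have hxX : x ∈ X := hSub X hX hx
      have hC : C (x, Xᶜ) := by
        intro y hy Y hY hyY hyμ
        by_cases h : (Xᶜ ∩ Y).Nonempty
        · exact h
        · -- then Y ⊆ X
          have hYX : Y ⊆ X := by
            intro z hz
            by_contra hzX
            exact h ⟨z, hzX, hz⟩
          rcases hy with hy | rfl
          · exact absurd (hYX hyY) hy
          · exact absurd (hPR Y hY X hX hYX ⟨hx, hyY⟩) hyμ
      refine ⟨hxX, ⟨⟨(x, Xᶜ), hC⟩, rfl, ?_⟩⟩
      rintro ⟨j, hjX, hj1, -⟩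
      exact hj1 hjX
    · -- prefMu ⊆ μ X
      rintro ⟨hxX, ⟨⟨⟨x', D⟩, hC⟩, rfl, hmin⟩⟩
      -- first: D ∩ X = ∅, else there'd be a smaller copy
      have hDX : ¬ (D ∩ X).Nonempty := by
        rintro ⟨z, hzD, hzX⟩
        have hCz : C (z, D) := by
          intro y hy Y hY hyY hyμ
          rcases hy with hy | rfl
          · exact hC y (Or.inl hy) Y hY hyY hyμ
          · exact hC y (Or.inl hzD) Y hY hyY hyμ
        exact hmin ⟨⟨(z, D), hCz⟩, hzX, hzD, le_refl D⟩
      by_contra hxμ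
      exact hDX (hC x' (Or.inr rfl) X hX hxX hxμ)
end

section
/- For every preferential structure ⟨I, ℓ, ≺⟩ over a set U there exists a preferential structure ⟨I', ℓ', ≺'⟩ over U whose relation ≺' is transitive and which has the same minimization function: for every X ⊆ U, μ_{⟨I,ℓ,≺⟩}(X) = μ_{⟨I',ℓ',≺'⟩}(X). -/
universe u v

/-- Every preferential structure is equivalent to a transitive one:
they have the same minimization functions. -/
theorem equiv_transitive_structure {U : Type u} {I : Type v}
    (ℓ : I → U) (prec : I → I → Prop) :
    ∃ (I' : Type (max u v)) (ℓ' : I' → U) (prec' : I' → I' → Prop),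
      Transitive prec' ∧ ∀ X : Set U, prefMu ℓ prec X = prefMu ℓ' prec' X := by
  classical
  refine ⟨ULift.{v} (U × Set U), fun p => p.down.1,
    fun q p => (p.down.1 ∈ prefMu ℓ prec p.down.2 ∧ q.down.1 ∉ p.down.2 ∧ p.down.2 ⊆ q.down.2)
      ∨ (p.down.1 ∉ prefMu ℓ prec p.down.2 ∧ q = p), ?_, ?_⟩
  · intro r q p hrq hqp
    rcases hqp with ⟨hGp, hq1, hsub⟩ | ⟨hBp, rfl⟩
    · rcases hrq with ⟨hGq, hr1, hsub'⟩ | ⟨hBq, rfl⟩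
      · exact Or.inl ⟨hGp, fun h => hr1 (hsub h), hsub.trans hsub'⟩
      · exact Or.inl ⟨hGp, hq1, hsub⟩
    · exact hrq
  · intro X
    ext x
    constructor
    · rintro ⟨hxX, i, hℓ, hmin⟩
      refine ⟨hxX, ⟨(x, X)⟩, rfl, ?_⟩
      rintro ⟨q, hqX, hq⟩
      rcases hq with ⟨_, hq1, _⟩ | ⟨hB, rfl⟩
      · exact hq1 hqX
      · exact hB ⟨hxX, i, hℓ, hmin⟩
    · rintro ⟨hxX, p, hℓ, hmin⟩
      by_cases hG : p.down.1 ∈ prefMu ℓ prec p.down.2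
      · obtain ⟨hp2, i, hi, hmini⟩ := hG
        refine ⟨hxX, i, hi.trans hℓ, ?_⟩
        rintro ⟨j, hjX, hji⟩
        have hXsub : X ⊆ p.down.2 := by
          intro y hy
          by_contra hny
          exact hmin ⟨⟨(y, Set.univ)⟩, hy,
            Or.inl ⟨⟨hp2, i, hi, hmini⟩, hny, fun _ _ => trivial⟩⟩
        exact hmini ⟨j, hXsub hjX, hji⟩
      · exact absurd ⟨p, hℓ ▸ hxX, Or.inr ⟨hG, rfl⟩⟩ hmin
end

section
/- Let Z be a set, 𝒴 a collection of subsets of Z closed under finite unions, and μ a function assigning to each X ∈ 𝒴 a subset μ(X) ⊆ Z satisfying (μ⊆), (μPR), and (μCUM). Then there exists a preferential structure ⟨I, ℓ, ≺⟩ over Z whose relation ≺ is transitive, which is smooth for every X ∈ 𝒴, and whose minimization function agrees with μ on 𝒴. -/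
universe u

namespace SmoothRep

variable {α : Type u}

open Classical in
/-- Pick an element of a set (junk if empty). -/
noncomputable def pick [Nonempty α] (S : Set α) : α :=
  if h : S.Nonempty then h.choose else Classical.arbitrary α

lemma pick_mem [Nonempty α] {S : Set α} (h : S.Nonempty) : pick S ∈ S := by
  unfold pick
  rw [dif_pos h]
  exact h.choose_spec

/-- Accumulated history of a path (head is the last step). -/
def Hst (X : Set α) : List (Set α) → Set α
  | [] => X
  | B :: p => Hst X p ∪ B

lemma subset_Hst (X : Set α) (p : List (Set α)) : X ⊆ Hst X p := by
  induction p with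
  | nil => exact subset_rfl
  | cons B p ih => exact ih.trans Set.subset_union_left

lemma Hst_append_subset (X : Set α) (p q : List (Set α)) :
    Hst X p ⊆ Hst X (q ++ p) := by
  induction q with
  | nil => exact subset_rfl
  | cons B q ih => exact ih.trans Set.subset_union_left

/-- Value of a node of a choice tree. -/
noncomputable def vv [Nonempty α] (μ : Set α → Set α) (X : Set α) (x : α) :
    List (Set α) → α
  | [] => x
  | B :: p => pick (μ (Hst X p ∪ B) \ Hst X p)

/-- Validity of a path. -/
def pathOK (𝒴 : Set (Set α)) (μ : Set α → Set α) (X : Set α) : List (Set α) → Prop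
  | [] => True
  | B :: p => pathOK 𝒴 μ X p ∧ B ∈ 𝒴 ∧ ¬ μ (Hst X p ∪ B) ⊆ Hst X p

lemma Hst_mem {𝒴 : Set (Set α)} {μ : Set α → Set α}
    (hUnion : ∀ A ∈ 𝒴, ∀ B ∈ 𝒴, A ∪ B ∈ 𝒴) {X : Set α} (hX : X ∈ 𝒴) :
    ∀ {p : List (Set α)}, pathOK 𝒴 μ X p → Hst X p ∈ 𝒴
  | [], _ => hX
  | _ :: _, h => hUnion _ (Hst_mem hUnion hX h.1) _ h.2.1

lemma vv_cons [Nonempty α] {𝒴 : Set (Set α)} {μ : Set α → Set α} {X B : Set α}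
    {p : List (Set α)} (x : α) (h : pathOK 𝒴 μ X (B :: p)) :
    vv μ X x (B :: p) ∈ μ (Hst X p ∪ B) \ Hst X p := by
  have hne : (μ (Hst X p ∪ B) \ Hst X p).Nonempty := by
    obtain ⟨y, hy, hy'⟩ := Set.not_subset.mp h.2.2
    exact ⟨y, hy, hy'⟩
  exact pick_mem hne

lemma vv_mem [Nonempty α] {𝒴 : Set (Set α)} {μ : Set α → Set α} {X : Set α} {x : α}
    (hx : x ∈ μ X) : ∀ {p : List (Set α)}, pathOK 𝒴 μ X p → vv μ X x p ∈ μ (Hst X p)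
  | [], _ => hx
  | _ :: _, h => (vv_cons _ h).1

lemma vv_append_notMem [Nonempty α] {𝒴 : Set (Set α)} {μ : Set α → Set α}
    {X : Set α} (x : α) {p q : List (Set α)} (hq : q ≠ [])
    (h : pathOK 𝒴 μ X (q ++ p)) : vv μ X x (q ++ p) ∉ Hst X p := by
  obtain ⟨B, q', rfl⟩ := List.exists_cons_of_ne_nil hq
  intro hmem
  exact (vv_cons (𝒴 := 𝒴) x h).2 (Hst_append_subset X p q' hmem)

/-- Key lemma: if the history of a node already "absorbs" μ of S, then all strict
descendants avoid S (and the absorption property propagates). -/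
lemma key [Nonempty α] {𝒴 : Set (Set α)} {μ : Set α → Set α}
    (hUnion : ∀ A ∈ 𝒴, ∀ B ∈ 𝒴, A ∪ B ∈ 𝒴)
    (hSub : ∀ X ∈ 𝒴, μ X ⊆ X)
    (hPR : ∀ X ∈ 𝒴, ∀ Y ∈ 𝒴, X ⊆ Y → μ Y ∩ X ⊆ μ X)
    (hCum : ∀ X ∈ 𝒴, ∀ Y ∈ 𝒴, μ X ⊆ Y → Y ⊆ X → μ Y = μ X)
    {X S : Set α} (hX : X ∈ 𝒴) (hS : S ∈ 𝒴) {p : List (Set α)} (x : α)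
    (hbase : μ (Hst X p ∪ S) ⊆ Hst X p) :
    ∀ q, pathOK 𝒴 μ X (q ++ p) →
      μ (Hst X (q ++ p) ∪ S) ⊆ Hst X (q ++ p) ∧ (q ≠ [] → vv μ X x (q ++ p) ∉ S) := by
  intro q
  induction q with
  | nil => exact fun _ => ⟨hbase, fun h => absurd rfl h⟩
  | cons B q ih =>
    intro hOK
    obtain ⟨hOK', hB, hne⟩ := hOK
    obtain ⟨hP, -⟩ := ih hOK'
    set G := Hst X (q ++ p) with hG
    have hGmem : G ∈ 𝒴 := Hst_mem hUnion hX hOK'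
    have hGB : G ∪ B ∈ 𝒴 := hUnion _ hGmem _ hB
    have hGS : G ∪ S ∈ 𝒴 := hUnion _ hGmem _ hS
    have hU : (G ∪ B) ∪ S ∈ 𝒴 := hUnion _ hGB _ hS
    have hGS_sub : G ∪ S ⊆ (G ∪ B) ∪ S := by
      rintro y (h | h)
      · exact Or.inl (Or.inl h)
      · exact Or.inr h
    have hSubset : μ ((G ∪ B) ∪ S) ⊆ G ∪ B := by
      intro y hy
      rcases hSub _ hU hy with h | h
      · exact h
      · have : y ∈ μ (G ∪ S) := hPR _ hGS _ hU hGS_sub ⟨hy, Or.inr h⟩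
        exact Or.inl (hP this)
    have hEq : μ (G ∪ B) = μ ((G ∪ B) ∪ S) :=
      hCum _ hU _ hGB hSubset Set.subset_union_left
    have hstep : pathOK 𝒴 μ X (B :: (q ++ p)) := ⟨hOK', hB, hne⟩
    have hc : vv μ X x (B :: (q ++ p)) ∈ μ (G ∪ B) \ G := vv_cons x hstep
    constructor
    · show μ ((G ∪ B) ∪ S) ⊆ G ∪ B
      exact hSubset
    · intro _ hcS
      have h1 : vv μ X x (B :: (q ++ p)) ∈ μ ((G ∪ B) ∪ S) := hEq ▸ hc.1
      have h2 : vv μ X x (B :: (q ++ p)) ∈ μ (G ∪ S) :=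
        hPR _ hGS _ hU hGS_sub ⟨h1, Or.inr hcS⟩
      exact hc.2 (hP h2)

end SmoothRep

open SmoothRep

/-- Any μ satisfying (μ⊆), (μPR), (μCUM) on a domain closed under finite unions
is represented by a transitive preferential structure which is smooth for every X ∈ 𝒴. -/
theorem representation_smooth_transitive {α : Type u} (𝒴 : Set (Set α)) (μ : Set α → Set α)
    (hUnion : ∀ A ∈ 𝒴, ∀ B ∈ 𝒴, A ∪ B ∈ 𝒴)
    (hSub : ∀ X ∈ 𝒴, μ X ⊆ X)
    (hPR : ∀ X ∈ 𝒴, ∀ Y ∈ 𝒴, X ⊆ Y → μ Y ∩ X ⊆ μ X)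
    (hCum : ∀ X ∈ 𝒴, ∀ Y ∈ 𝒴, μ X ⊆ Y → Y ⊆ X → μ Y = μ X) :
    ∃ (I : Type u) (ℓ : I → α) (prec : I → I → Prop),
      Transitive prec ∧
      (∀ X ∈ 𝒴, ∀ i : I, ℓ i ∈ X →
        (¬ ∃ j : I, ℓ j ∈ X ∧ prec j i) ∨
        (∃ j : I, prec j i ∧ ℓ j ∈ X ∧ ¬ ∃ k : I, ℓ k ∈ X ∧ prec k j)) ∧
      (∀ X ∈ 𝒴, μ X = prefMu ℓ prec X) := by
  classical
  rcases isEmpty_or_nonempty α with hemp | hne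
  · refine ⟨α, id, fun _ _ => False, fun _ _ _ h => h.elim,
      fun X _ i => isEmptyElim i, ?_⟩
    intro X hX
    ext x
    exact isEmptyElim x
  · refine ⟨{t : Set α × α × List (Set α) //
        t.1 ∈ 𝒴 ∧ t.2.1 ∈ μ t.1 ∧ pathOK 𝒴 μ t.1 t.2.2},
      fun t => vv μ t.val.1 t.val.2.1 t.val.2.2,
      fun i j => i.val.1 = j.val.1 ∧ i.val.2.1 = j.val.2.1 ∧
        ∃ q, q ≠ [] ∧ i.val.2.2 = q ++ j.val.2.2, ?_, ?_, ?_⟩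
    · -- transitivity
      rintro i j k ⟨e1, e2, q1, hq1, h1⟩ ⟨f1, f2, q2, hq2, h2⟩
      refine ⟨e1.trans f1, e2.trans f2, q1 ++ q2, ?_, ?_⟩
      · exact fun h => hq1 (List.append_eq_nil_iff.mp h).1
      · rw [h1, h2, List.append_assoc]
    · -- smoothness
      rintro X hX ⟨⟨X₀, x₀, p⟩, hX₀, hx₀, hp⟩ hz
      simp only at hz hx₀ hp hX₀
      by_cases hc : μ (Hst X₀ p ∪ X) ⊆ Hst X₀ p
      · left
        rintro ⟨⟨⟨X₁, x₁, p₁⟩, hprop⟩, hjX, hj1, hj2, q, hq, hq'⟩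
        simp only at hjX hj1 hj2 hq'
        rw [hj1, hj2, hq'] at hjX
        have hOK : pathOK 𝒴 μ X₀ (q ++ p) := by
          have h := hprop.2.2
          simp only at h
          rwa [hj1, hq'] at h
        exact (key hUnion hSub hPR hCum hX₀ hX x₀ hc q hOK).2 hq hjX
      · right
        have hstep : pathOK 𝒴 μ X₀ (X :: p) := ⟨hp, hX, hc⟩
        have hmem : vv μ X₀ x₀ (X :: p) ∈ μ (Hst X₀ p ∪ X) \ Hst X₀ p :=
          vv_cons x₀ hstep
        have hHm : Hst X₀ p ∈ 𝒴 := Hst_mem hUnion hX₀ hp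
        have hlabel : vv μ X₀ x₀ (X :: p) ∈ X := by
          rcases hSub _ (hUnion _ hHm _ hX) hmem.1 with h | h
          · exact absurd h hmem.2
          · exact h
        refine ⟨⟨⟨X₀, x₀, X :: p⟩, hX₀, hx₀, hstep⟩,
          ⟨rfl, rfl, [X], by simp, rfl⟩, hlabel, ?_⟩
        rintro ⟨⟨⟨X₁, x₁, p₁⟩, hprop⟩, hkX, hk1, hk2, q, hq, hq'⟩
        simp only at hkX hk1 hk2 hq'
        rw [hk1, hk2, hq'] at hkX
        have hOK : pathOK 𝒴 μ X₀ (q ++ (X :: p)) := by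
          have h := hprop.2.2
          simp only at h
          rwa [hk1, hq'] at h
        exact vv_append_notMem x₀ hq hOK (Or.inr hkX)
    · -- representation
      intro X hX
      ext z
      constructor
      · intro hz
        have hzX : z ∈ X := hSub _ hX hz
        refine ⟨hzX, ⟨⟨X, z, []⟩, hX, hz, trivial⟩, rfl, ?_⟩
        rintro ⟨⟨⟨X₁, x₁, p₁⟩, hprop⟩, hjX, hj1, hj2, q, hq, hq'⟩
        simp only at hjX hj1 hj2 hq'
        rw [List.append_nil] at hq'
        rw [hj1, hj2, hq'] at hjX
        obtain ⟨B, q', rfl⟩ := List.exists_cons_of_ne_nil hq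
        have hOK : pathOK 𝒴 μ X (B :: q') := by
          have h := hprop.2.2
          simp only at h
          rwa [hj1, hq'] at h
        exact (vv_cons (𝒴 := 𝒴) z hOK).2 (subset_Hst X q' hjX)
      · rintro ⟨hzX, ⟨⟨X₀, x₀, p⟩, hX₀, hx₀, hp⟩, hℓi, hmin⟩
        simp only at hX₀ hx₀ hp hℓi
        by_contra hzμ
        have hHm : Hst X₀ p ∈ 𝒴 := Hst_mem hUnion hX₀ hp
        have hvz : vv μ X₀ x₀ p ∈ μ (Hst X₀ p) := vv_mem hx₀ hp
        have hc : ¬ μ (Hst X₀ p ∪ X) ⊆ Hst X₀ p := by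
          intro hss
          have hEq : μ (Hst X₀ p) = μ (Hst X₀ p ∪ X) :=
            hCum _ (hUnion _ hHm _ hX) _ hHm hss Set.subset_union_left
          have h1 : z ∈ μ (Hst X₀ p ∪ X) := by
            rw [← hEq, ← hℓi]; exact hvz
          exact hzμ (hPR _ hX _ (hUnion _ hHm _ hX) Set.subset_union_right ⟨h1, hzX⟩)
        have hstep : pathOK 𝒴 μ X₀ (X :: p) := ⟨hp, hX, hc⟩
        have hmem : vv μ X₀ x₀ (X :: p) ∈ μ (Hst X₀ p ∪ X) \ Hst X₀ p :=
          vv_cons x₀ hstep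
        have hlabel : vv μ X₀ x₀ (X :: p) ∈ X := by
          rcases hSub _ (hUnion _ hHm _ hX) hmem.1 with h | h
          · exact absurd h hmem.2
          · exact h
        exact hmin ⟨⟨⟨X₀, x₀, X :: p⟩, hX₀, hx₀, hstep⟩, hlabel,
          rfl, rfl, [X], by simp, rfl⟩
end

section
/- Let Z be a set, 𝒴 a collection of subsets of Z closed under finite unions, and μ a function assigning to each X ∈ 𝒴 a subset μ(X) ⊆ Z satisfying (μ⊆), (μPR), and (μCUM). For U ∈ 𝒴 define H(U) := ⋃{X ∈ 𝒴 : μ(X) ⊆ U}. Then for all A, B, X, U, Y ∈ 𝒴: (i) μ(A) ⊆ B implies μ(A ∪ B) = μ(B); (ii) μ(X) ⊆ U and U ⊆ Y imply μ(Y) ∩ X ⊆ μ(U); (iii) μ(X) ⊆ U implies μ(U) ∩ X ⊆ μ(X); (iv) μ(U ∪ Y) \ H(U) ⊆ μ(Y); (v) μ(Y) ⊆ H(U) implies Y ⊆ H(U) and μ(U ∪ Y) = μ(U); (vi) if x ∈ μ(U) and x ∈ Y \ μ(Y), then Y ⊈ H(U); (vii) Y ⊈ H(U) implies μ(U ∪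 Y) ⊈ H(U). -/
/-- Properties of μ and of the hull H(U) = ⋃{X ∈ 𝒴 : μ(X) ⊆ U} under
(μ⊆), (μPR), (μCUM) and closure under finite unions. -/
theorem H_hull_facts {α : Type*} (𝒴 : Set (Set α)) (μ : Set α → Set α)
    (hUnion : ∀ A ∈ 𝒴, ∀ B ∈ 𝒴, A ∪ B ∈ 𝒴)
    (hSub : ∀ X ∈ 𝒴, μ X ⊆ X)
    (hPR : ∀ X ∈ 𝒴, ∀ Y ∈ 𝒴, X ⊆ Y → μ Y ∩ X ⊆ μ X)
    (hCum : ∀ X ∈ 𝒴, ∀ Y ∈ 𝒴, μ X ⊆ Y → Y ⊆ X → μ Y = μ X) :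
    let H : Set α → Set α := fun U => ⋃₀ {X | X ∈ 𝒴 ∧ μ X ⊆ U}
    (∀ A ∈ 𝒴, ∀ B ∈ 𝒴, μ A ⊆ B → μ (A ∪ B) = μ B) ∧
    (∀ X ∈ 𝒴, ∀ U ∈ 𝒴, ∀ Y ∈ 𝒴, μ X ⊆ U → U ⊆ Y → μ Y ∩ X ⊆ μ U) ∧
    (∀ X ∈ 𝒴, ∀ U ∈ 𝒴, μ X ⊆ U → μ U ∩ X ⊆ μ X) ∧
    (∀ U ∈ 𝒴, ∀ Y ∈ 𝒴, μ (U ∪ Y) \ H U ⊆ μ Y) ∧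
    (∀ U ∈ 𝒴, ∀ Y ∈ 𝒴, μ Y ⊆ H U → Y ⊆ H U ∧ μ (U ∪ Y) = μ U) ∧
    (∀ U ∈ 𝒴, ∀ Y ∈ 𝒴, ∀ x : α, x ∈ μ U → x ∈ Y \ μ Y → ¬ Y ⊆ H U) ∧
    (∀ U ∈ 𝒴, ∀ Y ∈ 𝒴, ¬ Y ⊆ H U → ¬ μ (U ∪ Y) ⊆ H U) := by
  intro H
  -- (i)
  have h1 : ∀ A ∈ 𝒴, ∀ B ∈ 𝒴, μ A ⊆ B → μ (A ∪ B) = μ B := by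
    intro A hA B hB hAB
    have hAB𝒴 := hUnion A hA B hB
    have hsub : μ (A ∪ B) ⊆ B := by
      intro x hx
      rcases hSub _ hAB𝒴 hx with hxA | hxB
      · exact hAB (hPR A hA (A ∪ B) hAB𝒴 Set.subset_union_left ⟨hx, hxA⟩)
      · exact hxB
    exact (hCum (A ∪ B) hAB𝒴 B hB hsub Set.subset_union_right).symm
  -- (ii)
  have h2 : ∀ X ∈ 𝒴, ∀ U ∈ 𝒴, ∀ Y ∈ 𝒴, μ X ⊆ U → U ⊆ Y → μ Y ∩ X ⊆ μ U := by
    intro X hX U hU Y hY hXU hUY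
    have hXY : μ (X ∪ Y) = μ Y := h1 X hX Y hY (hXU.trans hUY)
    have hXU' : μ (X ∪ U) = μ U := h1 X hX U hU hXU
    have hXU𝒴 := hUnion X hX U hU
    have hXY𝒴 := hUnion X hX Y hY
    intro x hx
    have hxXY : x ∈ μ (X ∪ Y) ∩ (X ∪ U) := ⟨hXY ▸ hx.1, Or.inl hx.2⟩
    have := hPR (X ∪ U) hXU𝒴 (X ∪ Y) hXY𝒴 (Set.union_subset_union_right X hUY) hxXY
    exact hXU' ▸ this
  -- (iii)
  have h3 : ∀ X ∈ 𝒴, ∀ U ∈ 𝒴, μ X ⊆ U → μ U ∩ X ⊆ μ X := by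
    intro X hX U hU hXU
    have hXU' : μ (X ∪ U) = μ U := h1 X hX U hU hXU
    intro x hx
    exact hPR X hX (X ∪ U) (hUnion X hX U hU) Set.subset_union_left ⟨hXU' ▸ hx.1, hx.2⟩
  -- U ⊆ H U
  have hUH : ∀ U ∈ 𝒴, U ⊆ H U := by
    intro U hU x hx
    exact ⟨U, ⟨hU, hSub U hU⟩, hx⟩
  -- (iv)
  have h4 : ∀ U ∈ 𝒴, ∀ Y ∈ 𝒴, μ (U ∪ Y) \ H U ⊆ μ Y := by
    intro U hU Y hY x hx
    have hxUY := hSub _ (hUnion U hU Y hY) hx.1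
    have hxY : x ∈ Y := by
      rcases hxUY with h | h
      · exact absurd (hUH U hU h) hx.2
      · exact h
    exact hPR Y hY (U ∪ Y) (hUnion U hU Y hY) Set.subset_union_right ⟨hx.1, hxY⟩
  -- (v)
  have h5 : ∀ U ∈ 𝒴, ∀ Y ∈ 𝒴, μ Y ⊆ H U → Y ⊆ H U ∧ μ (U ∪ Y) = μ U := by
    intro U hU Y hY hμY
    have hUY𝒴 := hUnion U hU Y hY
    have key : μ (U ∪ Y) ⊆ U := by
      intro x hx
      by_contra hxU
      have hxY : x ∈ Y := by
        rcases hSub _ hUY𝒴 hx with h | h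
        · exact absurd h hxU
        · exact h
      have hxμY : x ∈ μ Y := hPR Y hY (U ∪ Y) hUY𝒴 Set.subset_union_right ⟨hx, hxY⟩
      obtain ⟨X, ⟨hX, hXU⟩, hxX⟩ := hμY hxμY
      exact hxU (hSub U hU (h2 X hX U hU (U ∪ Y) hUY𝒴 hXU Set.subset_union_left ⟨hx, hxX⟩))
    refine ⟨fun y hy => ⟨U ∪ Y, ⟨hUY𝒴, key⟩, Or.inr hy⟩, ?_⟩
    exact (hCum (U ∪ Y) hUY𝒴 U hU key Set.subset_union_left).symm
  -- (vi)
  have h6 : ∀ U ∈ 𝒴, ∀ Y ∈ 𝒴, ∀ x : α, x ∈ μ U → x ∈ Y \ μ Y → ¬ Y ⊆ H U := by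
    intro U hU Y hY x hxU hxY hYH
    have hμY : μ Y ⊆ H U := (hSub Y hY).trans hYH
    have heq := (h5 U hU Y hY hμY).2
    have : x ∈ μ (U ∪ Y) := heq ▸ hxU
    exact hxY.2 (hPR Y hY (U ∪ Y) (hUnion U hU Y hY) Set.subset_union_right ⟨this, hxY.1⟩)
  -- (vii)
  have h7 : ∀ U ∈ 𝒴, ∀ Y ∈ 𝒴, ¬ Y ⊆ H U → ¬ μ (U ∪ Y) ⊆ H U := by
    intro U hU Y hY hYH hμ
    have hUY𝒴 := hUnion U hU Y hY
    have := (h5 U hU (U ∪ Y) hUY𝒴 hμ).1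
    exact hYH (Set.subset_union_right.trans this)
  exact ⟨h1, h2, h3, h4, h5, h6, h7⟩
end

section
/- Let ≺ be an irreflexive binary relation on a set X that is ranked and free of cycles. Then ≺ is transitive. -/
/-- An irreflexive, ranked, cycle-free relation is transitive. -/
theorem ranked_acyclic_transitive {X : Type*} (prec : X → X → Prop)
    (hIrr : ∀ x, ¬ prec x x)
    (hRank : ∀ x y, ¬ prec x y → ¬ prec y x →
      ∀ z, (prec z x → prec z y) ∧ (prec x z → prec y z))
    (hAcyc : ∀ x, ¬ Relation.TransGen prec x x) :
    Transitive prec := by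
  intro x y z hxy hyz
  by_contra hxz
  by_cases hzx : prec z x
  · exact hAcyc x (((Relation.TransGen.single hxy).tail hyz).tail hzx)
  · have hzy := (hRank x z hxz hzx y).2 hxy
    exact hAcyc y ((Relation.TransGen.single hyz).tail hzy)
end

section
/- Let U be a set, (Ω, <) a linearly ordered set, I a set, ℓ : I → U, and r : I → Ω, and let ≺ be the relation on I defined by i ≺ j iff r(i) < r(j), so that ⟨I, ℓ, ≺⟩ is a ranked preferential structure over U. Then its minimization function μ, defined on all subsets of U, satisfies (μ⊆), (μPR), (μ=), (μ='), (μ‖), (μ∪), (μ∪'), (μ∈), and (μRatM). -/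
section aux

variable {U Ω I : Type*} [LinearOrder Ω] (ℓ : I → U) (r : I → Ω)

lemma prefMu_mem_iff (X : Set U) (x : U) :
    x ∈ prefMu ℓ (fun i j => r i < r j) X ↔
      x ∈ X ∧ ∃ i, ℓ i = x ∧ ∀ j, ℓ j ∈ X → r i ≤ r j := by
  unfold prefMu
  simp only [Set.mem_setOf_eq, not_exists, not_and, not_lt]

lemma prefMu_subset (X : Set U) : prefMu ℓ (fun i j => r i < r j) X ⊆ X :=
  fun _ hx => ((prefMu_mem_iff ℓ r X _).1 hx).1

lemma prefMu_PR (X Y : Set U) (hXY : X ⊆ Y) :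
    prefMu ℓ (fun i j => r i < r j) Y ∩ X ⊆ prefMu ℓ (fun i j => r i < r j) X := by
  rintro x ⟨hxY, hxX⟩
  obtain ⟨-, i, hi, hmin⟩ := (prefMu_mem_iff ℓ r Y x).1 hxY
  exact (prefMu_mem_iff ℓ r X x).2 ⟨hxX, i, hi, fun j hj => hmin j (hXY hj)⟩

lemma prefMu_eq (X Y : Set U) (hXY : X ⊆ Y)
    (h : (X ∩ prefMu ℓ (fun i j => r i < r j) Y).Nonempty) :
    prefMu ℓ (fun i j => r i < r j) X = prefMu ℓ (fun i j => r i < r j) Y ∩ X := by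
  obtain ⟨x0, hx0X, hx0μ⟩ := h
  obtain ⟨-, i0, hi0, hmin0⟩ := (prefMu_mem_iff ℓ r Y x0).1 hx0μ
  apply Set.Subset.antisymm _ (prefMu_PR ℓ r X Y hXY)
  intro x hx
  obtain ⟨hxX, i, hi, hmin⟩ := (prefMu_mem_iff ℓ r X x).1 hx
  have hii0 : r i ≤ r i0 := hmin i0 (by rw [hi0]; exact hx0X)
  refine ⟨(prefMu_mem_iff ℓ r Y x).2 ⟨hXY hxX, i, hi, fun j hj => ?_⟩, hxX⟩
  exact hii0.trans (hmin0 j hj)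

lemma prefMu_union_mem (X Y : Set U) {x y : U}
    (hx : x ∈ prefMu ℓ (fun i j => r i < r j) X)
    (hy : y ∈ prefMu ℓ (fun i j => r i < r j) Y) :
    x ∈ prefMu ℓ (fun i j => r i < r j) (X ∪ Y) ∨
    y ∈ prefMu ℓ (fun i j => r i < r j) (X ∪ Y) := by
  obtain ⟨hxX, i, hi, hmini⟩ := (prefMu_mem_iff ℓ r X x).1 hx
  obtain ⟨hyY, k, hk, hmink⟩ := (prefMu_mem_iff ℓ r Y y).1 hy
  rcases le_total (r i) (r k) with h | h
  · left
    refine (prefMu_mem_iff ℓ r (X ∪ Y) x).2 ⟨Or.inl hxX, i, hi, fun j hj => ?_⟩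
    rcases hj with hj | hj
    · exact hmini j hj
    · exact h.trans (hmink j hj)
  · right
    refine (prefMu_mem_iff ℓ r (X ∪ Y) y).2 ⟨Or.inr hyY, k, hk, fun j hj => ?_⟩
    rcases hj with hj | hj
    · exact h.trans (hmini j hj)
    · exact hmink j hj

end aux

/-- In ranked preferential structures (relation induced by a rank function into a
linear order), μ satisfies (μ⊆), (μPR), (μ=), (μ='), (μ‖), (μ∪), (μ∪'), (μ∈), (μRatM). -/
theorem ranked_structure_mu_conditions {U Ω I : Type*} [LinearOrder Ω]
    (ℓ : I → U) (r : I → Ω) :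
    let μ : Set U → Set U := prefMu ℓ (fun i j => r i < r j)
    (∀ X : Set U, μ X ⊆ X) ∧
    (∀ X Y : Set U, X ⊆ Y → μ Y ∩ X ⊆ μ X) ∧
    (∀ X Y : Set U, X ⊆ Y → (X ∩ μ Y).Nonempty → μ X = μ Y ∩ X) ∧
    (∀ X Y : Set U, (μ Y ∩ X).Nonempty → μ (Y ∩ X) = μ Y ∩ X) ∧
    (∀ X Y : Set U, μ (X ∪ Y) = μ X ∨ μ (X ∪ Y) = μ Y ∨ μ (X ∪ Y) = μ X ∪ μ Y) ∧
    (∀ X Y : Set U, (μ Y ∩ (X \ μ X)).Nonempty → μ (X ∪ Y) ∩ Y = ∅) ∧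
    (∀ X Y : Set U, (μ Y ∩ (X \ μ X)).Nonempty → μ (X ∪ Y) = μ X) ∧
    (∀ X : Set U, ∀ a ∈ X \ μ X, ∃ b ∈ X, a ∉ μ {a, b}) ∧
    (∀ X Y : Set U, X ⊆ Y → (X ∩ μ Y).Nonempty → μ X ⊆ μ Y ∩ X) := by
  intro μ
  have hsub : ∀ X : Set U, μ X ⊆ X := prefMu_subset ℓ r
  have hPR : ∀ X Y : Set U, X ⊆ Y → μ Y ∩ X ⊆ μ X := prefMu_PR ℓ r
  have hEq : ∀ X Y : Set U, X ⊆ Y → (X ∩ μ Y).Nonempty → μ X = μ Y ∩ X := prefMu_eq ℓ r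
  -- key fact for (μ∪) and (μ∪'): from the hypothesis extract a copy j0 in X
  -- strictly below the Y-minimum
  have hKey : ∀ X Y : Set U, (μ Y ∩ (X \ μ X)).Nonempty →
      ∃ k j0, ℓ j0 ∈ X ∧ r j0 < r k ∧ (∀ j, ℓ j ∈ Y → r k ≤ r j) := by
    intro X Y ⟨a, haμY, haX, haμX⟩
    obtain ⟨haY, k, hk, hmink⟩ := (prefMu_mem_iff ℓ r Y a).1 haμY
    have : ¬ (a ∈ X ∧ ∃ i, ℓ i = a ∧ ∀ j, ℓ j ∈ X → r i ≤ r j) := by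
      intro h; exact haμX ((prefMu_mem_iff ℓ r X a).2 h)
    push_neg at this
    obtain ⟨j0, hj0X, hj0k⟩ := this haX k hk
    exact ⟨k, j0, hj0X, hj0k, hmink⟩
  have hUnion : ∀ X Y : Set U, (μ Y ∩ (X \ μ X)).Nonempty → μ (X ∪ Y) ∩ Y = ∅ := by
    intro X Y h
    obtain ⟨k, j0, hj0X, hj0k, hmink⟩ := hKey X Y h
    ext y
    simp only [Set.mem_inter_iff, Set.mem_empty_iff_false, iff_false, not_and]
    intro hyμ hyY
    obtain ⟨-, i, hi, hmini⟩ := (prefMu_mem_iff ℓ r (X ∪ Y) y).1 hyμ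
    have h1 : r i ≤ r j0 := hmini j0 (Or.inl hj0X)
    have h2 : r k ≤ r i := hmink i (by rw [hi]; exact hyY)
    exact absurd (h2.trans_lt (h1.trans_lt hj0k)) (lt_irrefl _)
  have hUnion' : ∀ X Y : Set U, (μ Y ∩ (X \ μ X)).Nonempty → μ (X ∪ Y) = μ X := by
    intro X Y h
    obtain ⟨k, j0, hj0X, hj0k, hmink⟩ := hKey X Y h
    apply Set.Subset.antisymm
    · intro z hz
      have hzY : z ∉ Y := fun hzY =>
        (Set.eq_empty_iff_forall_notMem.1 (hUnion X Y h) z) ⟨hz, hzY⟩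
      have hzX : z ∈ X := (hsub (X ∪ Y) hz).resolve_right hzY
      exact hPR X (X ∪ Y) Set.subset_union_left ⟨hz, hzX⟩
    · intro x hx
      obtain ⟨hxX, i, hi, hmini⟩ := (prefMu_mem_iff ℓ r X x).1 hx
      refine (prefMu_mem_iff ℓ r (X ∪ Y) x).2 ⟨Or.inl hxX, i, hi, fun j hj => ?_⟩
      rcases hj with hj | hj
      · exact hmini j hj
      · exact ((hmini j0 hj0X).trans hj0k.le).trans (hmink j hj)
  refine ⟨hsub, hPR, hEq, ?_, ?_, hUnion, hUnion', ?_, ?_⟩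
  · -- (μ=')
    intro X Y h
    have h1 : (Y ∩ X ∩ μ Y).Nonempty := by
      obtain ⟨a, h1, h2⟩ := h
      exact ⟨a, ⟨hsub Y h1, h2⟩, h1⟩
    have := hEq (Y ∩ X) Y Set.inter_subset_left h1
    rw [this]
    ext z
    simp only [Set.mem_inter_iff]
    constructor
    · rintro ⟨h1, -, h2⟩; exact ⟨h1, h2⟩
    · rintro ⟨h1, h2⟩; exact ⟨h1, hsub Y h1, h2⟩
  · -- (μ‖)
    intro X Y
    by_cases hX : (μ (X ∪ Y) ∩ X).Nonempty
    · by_cases hY : (μ (X ∪ Y) ∩ Y).Nonempty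
      · right; right
        have e1 : μ X = μ (X ∪ Y) ∩ X :=
          hEq X (X ∪ Y) Set.subset_union_left (by rwa [Set.inter_comm] at hX)
        have e2 : μ Y = μ (X ∪ Y) ∩ Y :=
          hEq Y (X ∪ Y) Set.subset_union_right (by rwa [Set.inter_comm] at hY)
        rw [e1, e2, ← Set.inter_union_distrib_left,
          Set.inter_eq_left.2 (hsub (X ∪ Y))]
      · left
        have e1 : μ X = μ (X ∪ Y) ∩ X :=
          hEq X (X ∪ Y) Set.subset_union_left (by rwa [Set.inter_comm] at hX)
        rw [e1]
        symm
        rw [Set.inter_eq_left]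
        intro z hz
        rcases hsub (X ∪ Y) hz with h | h
        · exact h
        · exact absurd ⟨z, hz, h⟩ hY
    · by_cases hY : (μ (X ∪ Y) ∩ Y).Nonempty
      · right; left
        have e2 : μ Y = μ (X ∪ Y) ∩ Y :=
          hEq Y (X ∪ Y) Set.subset_union_right (by rwa [Set.inter_comm] at hY)
        rw [e2]
        symm
        rw [Set.inter_eq_left]
        intro z hz
        rcases hsub (X ∪ Y) hz with h | h
        · exact absurd ⟨z, hz, h⟩ hX
        · exact h
      · -- μ (X ∪ Y) = ∅; then μ X = ∅ or μ Y = ∅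
        have hXYempty : μ (X ∪ Y) = ∅ := by
          ext z
          simp only [Set.mem_empty_iff_false, iff_false]
          intro hz
          rcases hsub (X ∪ Y) hz with h | h
          · exact hX ⟨z, hz, h⟩
          · exact hY ⟨z, hz, h⟩
        by_cases hμX : (μ X).Nonempty
        · right; left
          rw [hXYempty]
          ext y
          simp only [Set.mem_empty_iff_false, false_iff]
          intro hy
          obtain ⟨x, hx⟩ := hμX
          rcases prefMu_union_mem ℓ r X Y hx hy with h | h
          · exact hX ⟨x, h, hsub X hx⟩
          · exact hY ⟨y, h, hsub Y hy⟩
        · left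
          rw [hXYempty, Set.not_nonempty_iff_eq_empty.1 hμX]
  · -- (μ∈)
    intro X a ⟨haX, haμX⟩
    by_cases hmin : ∃ i, ℓ i = a ∧ ∀ j, ℓ j = a → r i ≤ r j
    · obtain ⟨i0, hi0, hmin0⟩ := hmin
      have : ¬ (a ∈ X ∧ ∃ i, ℓ i = a ∧ ∀ j, ℓ j ∈ X → r i ≤ r j) := by
        intro h; exact haμX ((prefMu_mem_iff ℓ r X a).2 h)
      push_neg at this
      obtain ⟨j0, hj0X, hj0⟩ := this haX i0 hi0
      refine ⟨ℓ j0, hj0X, fun ha => ?_⟩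
      obtain ⟨-, i, hi, hmini⟩ := (prefMu_mem_iff ℓ r {a, ℓ j0} a).1 ha
      have h1 : r i0 ≤ r i := hmin0 i hi
      have h2 : r i ≤ r j0 := hmini j0 (Or.inr rfl)
      exact absurd ((h1.trans h2).trans_lt hj0) (lt_irrefl _)
    · push_neg at hmin
      refine ⟨a, haX, fun ha => ?_⟩
      obtain ⟨-, i, hi, hmini⟩ := (prefMu_mem_iff ℓ r {a, a} a).1 ha
      obtain ⟨j, hj, hji⟩ := hmin i hi
      exact absurd (hmini j (Or.inl hj)) (not_le.2 hji)
  · -- (μRatM)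
    intro X Y hXY h
    rw [hEq X Y hXY h]
end

section
/- Let U be a set, 𝒴 a collection of subsets of U closed under finite unions, and μ a function assigning to each X ∈ 𝒴 a subset μ(X) ⊆ U satisfying (μ⊆), (μ∅), and (μ=). Then there exists a total preorder ≲ on U (total, reflexive, transitive) such that, writing x < y for (x ≲ y and not y ≲ x): (i) for every X ∈ 𝒴, μ(X) = {x ∈ X : there is no y ∈ X with y < x}; and (ii) for every X ∈ 𝒴 and every x ∈ X \ μ(X) there is y ∈ μ(X) with y < x (i.e., the representing ranked structure is 𝒴-smooth). -/
/-- Representation of μ satisfying (μ⊆), (μ∅), (μ=) (domain closed under finite unions)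
by a total preorder: μ(X) is the set of minimal elements of X with respect to the strict
part of the preorder, and the structure is 𝒴-smooth. -/
theorem ranked_smooth_representation {α : Type*} (𝒴 : Set (Set α)) (μ : Set α → Set α)
    (hUnion : ∀ A ∈ 𝒴, ∀ B ∈ 𝒴, A ∪ B ∈ 𝒴)
    (hSub : ∀ X ∈ 𝒴, μ X ⊆ X)
    (hEmpty : ∀ X ∈ 𝒴, μ X = ∅ → X = ∅)
    (hEq : ∀ X ∈ 𝒴, ∀ Y ∈ 𝒴, X ⊆ Y → (X ∩ μ Y).Nonempty → μ X = μ Y ∩ X) :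
    ∃ S : α → α → Prop,
      (∀ x y, S x y ∨ S y x) ∧
      (∀ x, S x x) ∧
      (∀ x y z, S x y → S y z → S x z) ∧
      (∀ X ∈ 𝒴, μ X = {x | x ∈ X ∧ ¬ ∃ y ∈ X, S y x ∧ ¬ S x y}) ∧
      (∀ X ∈ 𝒴, ∀ x ∈ X \ μ X, ∃ y ∈ μ X, S y x ∧ ¬ S x y) := by
  classical
  -- R x y : x is minimal in some set of 𝒴 containing y
  set R : α → α → Prop := fun x y => ∃ X ∈ 𝒴, x ∈ μ X ∧ y ∈ X with hR
  -- M x : x is minimal somewhere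
  set M : α → Prop := fun x => ∃ X ∈ 𝒴, x ∈ μ X with hM
  set S : α → α → Prop := fun x y => R x y ∨ ¬ M y with hS
  -- dichotomy: μ of a union meets one of the parts, and then determines μ of that part
  have hPart : ∀ A ∈ 𝒴, ∀ B ∈ 𝒴, (A ∩ μ (A ∪ B)).Nonempty → μ A = μ (A ∪ B) ∩ A := by
    intro A hA B hB hne
    exact hEq A hA (A ∪ B) (hUnion A hA B hB) Set.subset_union_left hne
  have hCase : ∀ A ∈ 𝒴, ∀ B ∈ 𝒴, (A ∪ B).Nonempty →
      (A ∩ μ (A ∪ B)).Nonempty ∨ (B ∩ μ (A ∪ B)).Nonempty := by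
    intro A hA B hB hne
    have hABmem := hUnion A hA B hB
    have : (μ (A ∪ B)).Nonempty := by
      rcases Set.eq_empty_or_nonempty (μ (A ∪ B)) with h | h
      · exact absurd (hEmpty _ hABmem h) (Set.nonempty_iff_ne_empty.mp hne)
      · exact h
    rcases this with ⟨w, hw⟩
    rcases hSub _ hABmem hw with hwA | hwB
    · exact Or.inl ⟨w, hwA, hw⟩
    · exact Or.inr ⟨w, hwB, hw⟩
  -- key lemma
  have hKey : ∀ X ∈ 𝒴, ∀ Z ∈ 𝒴, ∀ x y : α, x ∈ μ Z → x ∈ X → y ∈ μ X → y ∈ Z → x ∈ μ X := by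
    intro X hX Z hZ x y hxZ hxX hyX hyZ
    have hne : (X ∪ Z).Nonempty := ⟨x, Or.inl hxX⟩
    rcases hCase X hX Z hZ hne with h | h
    · have e1 := hPart X hX Z hZ h
      have hyW : y ∈ μ (X ∪ Z) := by
        have : y ∈ μ (X ∪ Z) ∩ X := e1 ▸ hyX
        exact this.1
      have h2 : (Z ∩ μ (Z ∪ X)).Nonempty := by
        rw [Set.union_comm Z X]; exact ⟨y, hyZ, hyW⟩
      have e2 := hPart Z hZ X hX h2
      rw [Set.union_comm Z X] at e2
      have hxW : x ∈ μ (X ∪ Z) := by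
        have : x ∈ μ (X ∪ Z) ∩ Z := e2 ▸ hxZ
        exact this.1
      have : x ∈ μ (X ∪ Z) ∩ X := ⟨hxW, hxX⟩
      exact e1 ▸ this
    · have h2 : (Z ∩ μ (Z ∪ X)).Nonempty := by
        rw [Set.union_comm Z X]; exact h
      have e2 := hPart Z hZ X hX h2
      rw [Set.union_comm Z X] at e2
      have hxW : x ∈ μ (X ∪ Z) := by
        have : x ∈ μ (X ∪ Z) ∩ Z := e2 ▸ hxZ
        exact this.1
      have h1 : (X ∩ μ (X ∪ Z)).Nonempty := ⟨x, hxX, hxW⟩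
      have e1 := hPart X hX Z hZ h1
      have : x ∈ μ (X ∪ Z) ∩ X := ⟨hxW, hxX⟩
      exact e1 ▸ this
  refine ⟨S, ?_, ?_, ?_, ?_, ?_⟩
  · -- total
    intro x y
    by_cases hMy : M y
    · by_cases hMx : M x
      · rcases hMx with ⟨X, hX, hxX⟩
        rcases hMy with ⟨Y, hY, hyY⟩
        have hne : (X ∪ Y).Nonempty := ⟨x, Or.inl (hSub X hX hxX)⟩
        rcases hCase X hX Y hY hne with h | h
        · have e1 := hPart X hX Y hY h
          have hxW : x ∈ μ (X ∪ Y) := by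
            have : x ∈ μ (X ∪ Y) ∩ X := e1 ▸ hxX
            exact this.1
          exact Or.inl (Or.inl ⟨X ∪ Y, hUnion X hX Y hY, hxW, Or.inr (hSub Y hY hyY)⟩)
        · have h2 : (Y ∩ μ (Y ∪ X)).Nonempty := by rw [Set.union_comm Y X]; exact h
          have e2 := hPart Y hY X hX h2
          have hyW : y ∈ μ (Y ∪ X) := by
            have : y ∈ μ (Y ∪ X) ∩ Y := e2 ▸ hyY
            exact this.1
          exact Or.inr (Or.inl ⟨Y ∪ X, hUnion Y hY X hX, hyW, Or.inr (hSub X hX hxX)⟩)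
      · exact Or.inr (Or.inr hMx)
    · exact Or.inl (Or.inr hMy)
  · -- refl
    intro x
    by_cases h : M x
    · rcases h with ⟨X, hX, hxX⟩
      exact Or.inl ⟨X, hX, hxX, hSub X hX hxX⟩
    · exact Or.inr h
  · -- trans
    intro x y z hxy hyz
    by_cases hMz : M z
    · rcases hyz with hRyz | h
      · rcases hRyz with ⟨Y, hY, hyY, hzY⟩
        have hMy : M y := ⟨Y, hY, hyY⟩
        rcases hxy with hRxy | h
        · rcases hRxy with ⟨X, hX, hxX, hyX⟩
          -- show R x z via X ∪ Y
          have hne : (X ∪ Y).Nonempty := ⟨y, Or.inl hyX⟩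
          have hmemXY := hUnion X hX Y hY
          have main : x ∈ μ (X ∪ Y) := by
            rcases hCase X hX Y hY hne with h1 | h1
            · have e1 := hPart X hX Y hY h1
              have : x ∈ μ (X ∪ Y) ∩ X := e1 ▸ hxX
              exact this.1
            · have h2 : (Y ∩ μ (Y ∪ X)).Nonempty := by rw [Set.union_comm Y X]; exact h1
              have e2 := hPart Y hY X hX h2
              have hyW : y ∈ μ (Y ∪ X) := by
                have : y ∈ μ (Y ∪ X) ∩ Y := e2 ▸ hyY
                exact this.1
              rw [Set.union_comm Y X] at hyW
              have h1' : (X ∩ μ (X ∪ Y)).Nonempty := ⟨y, hyX, hyW⟩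
              have e1 := hPart X hX Y hY h1'
              have : x ∈ μ (X ∪ Y) ∩ X := e1 ▸ hxX
              exact this.1
          exact Or.inl ⟨X ∪ Y, hmemXY, main, Or.inr hzY⟩
        · exact absurd hMy h
      · exact absurd hMz h
    · exact Or.inr hMz
  · -- representation
    intro X hX
    ext x
    simp only [Set.mem_setOf_eq]
    constructor
    · intro hx
      refine ⟨hSub X hX hx, ?_⟩
      rintro ⟨y, hyX, hSyx, hnSxy⟩
      exact hnSxy (Or.inl ⟨X, hX, hx, hyX⟩)
    · rintro ⟨hxX, hno⟩
      have hne : (μ X).Nonempty := by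
        rcases Set.eq_empty_or_nonempty (μ X) with h | h
        · exact absurd (hEmpty X hX h) (Set.nonempty_iff_ne_empty.mp ⟨x, hxX⟩)
        · exact h
      rcases hne with ⟨y, hy⟩
      have hSyx : S y x := Or.inl ⟨X, hX, hy, hxX⟩
      have hSxy : S x y := by
        by_contra hn
        exact hno ⟨y, hSub X hX hy, hSyx, hn⟩
      rcases hSxy with hRxy | h
      · rcases hRxy with ⟨Z, hZ, hxZ, hyZ⟩
        exact hKey X hX Z hZ x y hxZ hxX hy hyZ
      · exact absurd ⟨X, hX, hy⟩ h
  · -- smoothness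
    intro X hX x hx
    rcases hx with ⟨hxX, hxn⟩
    have hne : (μ X).Nonempty := by
      rcases Set.eq_empty_or_nonempty (μ X) with h | h
      · exact absurd (hEmpty X hX h) (Set.nonempty_iff_ne_empty.mp ⟨x, hxX⟩)
      · exact h
    rcases hne with ⟨y, hy⟩
    refine ⟨y, hy, Or.inl ⟨X, hX, hy, hxX⟩, ?_⟩
    rintro (hRxy | h)
    · rcases hRxy with ⟨Z, hZ, hxZ, hyZ⟩
      exact hxn (hKey X hX Z hZ x y hxZ hxX hy hyZ)
    · exact h ⟨X, hX, hy⟩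
end
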